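/- The pathological algorithm that, on input s ∈ {-1,+1}^m, selects a uniformly random subset U ⊆ [m] of size r, sets T_i = 0 for i ∉ U, samples X ~ Bernoulli(β), and for i ∈ U independently sets T_i = s_i with probability (mδ)/(rβ) + (1−(mδ)/(rβ))·e^ε/(e^ε+1) if X=1, and with probability e^ε/(e^ε+1) if X=0 (otherwise T_i = −s_i), satisfies (ε,δ)-differential privacy with respect to flipping one input coordinate, provided 0 < mδ ≤ rβ. -/

import Mathlib

set_option maxHeartbeats 1000000

open Real

/-- The ±1 sign (as an integer) of a boolean. -/
def isgn (b : Bool) : ℤ := if b then 1 else -1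

def Adjacent {m : ℕ} (s s' : Fin m → Bool) : Prop := ∃ j, ∀ i, i ≠ j → s i = s' i

/-- Probability that a single guess equals `t` when the true value is `isgn s` and the guess is
correct with probability `q` (and wrong, i.e. the opposite sign, with probability `1-q`). -/
def guessPr (q : ℝ) (s : Bool) (t : ℤ) : ℝ :=
  if t = isgn s then q else if t = -isgn s then 1 - q else 0

/-- The output pmf of the pathological algorithm (Algorithm 5): pick a uniformly random
`U ⊆ [m]` with `|U| = r`, set `Tᵢ = 0` off `U`; with probability `β` each guess on `U` is
correct independently with probability `(mδ)/(rβ) + (1 − (mδ)/(rβ))·eᵉ/(eᵉ+1)`, and with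
probability `1-β` each is correct independently with probability `eᵉ/(eᵉ+1)`. -/
noncomputable def pathologicalPmf (m r : ℕ) (ε δ β : ℝ)
    (s : Fin m → Bool) (t : Fin m → ℤ) : ℝ :=
  (1 / (m.choose r : ℝ)) *
    ∑ U ∈ Finset.powersetCard r (Finset.univ : Finset (Fin m)),
      if ∀ i ∉ U, t i = 0 then
        β * ∏ i ∈ U, guessPr (m * δ / (r * β)
              + (1 - m * δ / (r * β)) * (exp ε / (exp ε + 1))) (s i) (t i)
          + (1 - β) * ∏ i ∈ U, guessPr (exp ε / (exp ε + 1)) (s i) (t i)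
      else 0

lemma guessPr_nonneg {q : ℝ} (h0 : 0 ≤ q) (h1 : q ≤ 1) (s : Bool) (t : ℤ) :
    0 ≤ guessPr q s t := by
  unfold guessPr; split_ifs <;> linarith

lemma guessPr_sum (q : ℝ) (s : Bool) :
    ∑ x ∈ ({-1, 0, 1} : Finset ℤ), guessPr q s x = 1 := by
  cases s <;> norm_num [guessPr, isgn]

lemma guessPr_eq_zero {q : ℝ} {s : Bool} {t : ℤ} (h : t ∉ ({-1, 0, 1} : Finset ℤ)) :
    guessPr q s t = 0 := by
  simp only [Finset.mem_insert, Finset.mem_singleton] at h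
  push_neg at h
  cases s <;> simp [guessPr, isgn, h.1, h.2.2]

lemma guessPr_key {q c E : ℝ} (hc : 0 ≤ c) (hE : 1 ≤ E)
    (hq0 : 0 ≤ q) (hq1 : q ≤ 1)
    (h1 : q ≤ E * (1 - q) + c) (h2 : 1 - q ≤ E * q)
    (x y : Bool) (u : ℤ) :
    guessPr q x u ≤ E * guessPr q y u + c * (if u = isgn x then 1 else 0) := by
  cases x <;> cases y <;> simp only [guessPr, isgn] <;> norm_num <;> split_ifs <;>
    first
      | linarith
      | nlinarith
      | (exfalso; omega)

lemma count_contains (m r : ℕ) (hr : 1 ≤ r) (j : Fin m) :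
    ((Finset.powersetCard r (Finset.univ : Finset (Fin m))).filter (fun U => j ∈ U)).card
      = (m - 1).choose (r - 1) := by
  have h := Finset.card_powersetCard (r - 1) ((Finset.univ : Finset (Fin m)).erase j)
  rw [Finset.card_erase_of_mem (Finset.mem_univ j), Finset.card_univ, Fintype.card_fin] at h
  rw [← h]
  apply Finset.card_bij (fun U _ => U.erase j)
  · intro U hU
    simp only [Finset.mem_filter, Finset.mem_powersetCard] at hU
    rw [Finset.mem_powersetCard]
    exact ⟨Finset.erase_subset_erase j (Finset.subset_univ U),
      by rw [Finset.card_erase_of_mem hU.2, hU.1.2]⟩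
  · intro U hU V hV hUV
    simp only [Finset.mem_filter] at hU hV
    rw [← Finset.insert_erase hU.2, ← Finset.insert_erase hV.2, hUV]
  · intro V hV
    rw [Finset.mem_powersetCard] at hV
    have hjV : j ∉ V := fun h => (Finset.mem_erase.1 (hV.1 h)).1 rfl
    refine ⟨insert j V, ?_, by rw [Finset.erase_insert hjV]⟩
    simp only [Finset.mem_filter, Finset.mem_powersetCard]
    exact ⟨⟨Finset.subset_univ _, by rw [Finset.card_insert_of_notMem hjV, hV.2]; omega⟩,
      Finset.mem_insert_self j V⟩

theorem pathological_algorithm_dp (m r : ℕ) (hm : 1 ≤ m) (hr1 : 1 ≤ r) (hrm : r ≤ m)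
    (ε δ β : ℝ) (hε : 0 ≤ ε) (hδ : 0 ≤ δ) (hβ0 : 0 < β) (hβ1 : β ≤ 1)
    (hδpos : 0 < m * δ) (hδβ : m * δ ≤ r * β) :
    ∀ s s' : Fin m → Bool, Adjacent s s' → ∀ A : Set (Fin m → ℤ),
      ∑' t : Fin m → ℤ, A.indicator (pathologicalPmf m r ε δ β s) t
        ≤ exp ε * ∑' t : Fin m → ℤ, A.indicator (pathologicalPmf m r ε δ β s') t + δ := by
  intro s s' hadj A
  obtain ⟨j, hj⟩ := hadj
  obtain ⟨E, hE⟩ : ∃ E : ℝ, E = exp ε := ⟨_, rfl⟩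
  rw [← hE]
  have hE1 : 1 ≤ E := hE ▸ Real.one_le_exp hε
  have hE10 : (0:ℝ) < E + 1 := by linarith
  obtain ⟨P, hP⟩ : ∃ P : ℝ, P = E / (E + 1) := ⟨_, rfl⟩
  have hP0 : 0 ≤ P := by rw [hP]; positivity
  have hP1 : P ≤ 1 := by rw [hP, div_le_one hE10]; linarith
  have hEP : E * (1 - P) = P := by rw [hP]; field_simp; ring
  have hrβ : (0:ℝ) < r * β := lt_of_lt_of_le hδpos hδβ
  obtain ⟨a, ha⟩ : ∃ a : ℝ, a = (m : ℝ) * δ / (r * β) := ⟨_, rfl⟩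
  have ha0 : 0 < a := ha ▸ div_pos hδpos hrβ
  have ha1 : a ≤ 1 := by rw [ha, div_le_one hrβ]; exact hδβ
  obtain ⟨Q, hQ⟩ : ∃ Q : ℝ, Q = a + (1 - a) * P := ⟨_, rfl⟩
  have hQ0 : 0 ≤ Q := by rw [hQ]; nlinarith
  have hQ1 : Q ≤ 1 := by rw [hQ]; nlinarith
  have hPQle : P ≤ Q := by rw [hQ]; nlinarith
  obtain ⟨c, hc⟩ : ∃ c : ℝ, c = (1 / (m.choose r : ℝ)) := ⟨_, rfl⟩
  have hCpos : 0 < (m.choose r : ℝ) := by exact_mod_cast Nat.choose_pos hrm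
  have hc0 : 0 ≤ c := by rw [hc]; positivity
  obtain ⟨PC, hPC⟩ : ∃ PC, PC = Finset.powersetCard r (Finset.univ : Finset (Fin m)) :=
    ⟨_, rfl⟩
  have pmf_eq : ∀ (sc : Fin m → Bool) (t : Fin m → ℤ),
      pathologicalPmf m r ε δ β sc t =
        c * ∑ U ∈ PC, (if ∀ i ∉ U, t i = 0 then
            β * ∏ i ∈ U, guessPr Q (sc i) (t i)
              + (1 - β) * ∏ i ∈ U, guessPr P (sc i) (t i)
          else 0) := by
    intro sc t
    rw [pathologicalPmf, hc, hPC, hQ, ha, hP, hE]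
  -- key single-coordinate inequalities
  have hkeyP : ∀ (x y : Bool) (u : ℤ), guessPr P x u ≤ E * guessPr P y u := by
    intro x y u
    have := guessPr_key (le_refl (0:ℝ)) hE1 hP0 hP1
      (by rw [hEP]; linarith) (by nlinarith) x y u
    simpa using this
  have hkeyQ : ∀ (x y : Bool) (u : ℤ),
      guessPr Q x u ≤ E * guessPr Q y u + a * (if u = isgn x then 1 else 0) := by
    intro x y u
    refine guessPr_key ha0.le hE1 hQ0 hQ1 ?_ ?_ x y u
    · have h5 : E * (1 - Q) = (1 - a) * P := by rw [hQ]; nlinarith [hEP]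
      rw [h5, hQ]; linarith
    · nlinarith [hEP]
  -- the support finset
  obtain ⟨S, hS⟩ : ∃ S, S = Fintype.piFinset (fun _ : Fin m => ({-1, 0, 1} : Finset ℤ)) :=
    ⟨_, rfl⟩
  have hsupp : ∀ (sc : Fin m → Bool) (t : Fin m → ℤ), t ∉ S →
      pathologicalPmf m r ε δ β sc t = 0 := by
    intro sc t ht
    rw [hS, Fintype.mem_piFinset] at ht
    push_neg at ht
    obtain ⟨i, hi⟩ := ht
    rw [pmf_eq, mul_eq_zero]
    right
    apply Finset.sum_eq_zero
    intro U _
    split_ifs with h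
    · by_cases hiU : i ∈ U
      · rw [Finset.prod_eq_zero hiU (guessPr_eq_zero hi),
          Finset.prod_eq_zero hiU (guessPr_eq_zero hi)]
        ring
      · exact absurd (h i hiU) (by intro h0; apply hi; simp [h0])
    · rfl
  have htsum : ∀ sc : Fin m → Bool,
      ∑' t : Fin m → ℤ, A.indicator (pathologicalPmf m r ε δ β sc) t
        = ∑ t ∈ S, A.indicator (pathologicalPmf m r ε δ β sc) t := by
    intro sc
    apply tsum_eq_sum
    intro t ht
    exact Set.indicator_apply_eq_zero.2 (fun _ => hsupp sc t ht)
  -- products are nonnegative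
  have hprodQ : ∀ (sc : Fin m → Bool) (V : Finset (Fin m)) (t : Fin m → ℤ),
      0 ≤ ∏ i ∈ V, guessPr Q (sc i) (t i) :=
    fun sc V t => Finset.prod_nonneg fun i _ => guessPr_nonneg hQ0 hQ1 _ _
  have hprodP : ∀ (sc : Fin m → Bool) (V : Finset (Fin m)) (t : Fin m → ℤ),
      0 ≤ ∏ i ∈ V, guessPr P (sc i) (t i) :=
    fun sc V t => Finset.prod_nonneg fun i _ => guessPr_nonneg hP0 hP1 _ _
  -- the extra (privacy-loss) term
  obtain ⟨G, hGdef⟩ : ∃ G : (Fin m → ℤ) → ℝ, G = fun t =>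
      c * ∑ U ∈ PC, (if j ∈ U ∧ (∀ i ∉ U, t i = 0) ∧ t j = isgn (s j) then
        β * a * ∏ i ∈ U.erase j, guessPr Q (s i) (t i) else 0) := ⟨_, rfl⟩
  have hG0 : ∀ t, 0 ≤ G t := by
    intro t
    rw [hGdef]
    refine mul_nonneg hc0 (Finset.sum_nonneg fun U _ => ?_)
    split_ifs
    · exact mul_nonneg (mul_nonneg hβ0.le ha0.le) (hprodQ s (U.erase j) t)
    · exact le_refl 0
  -- the per-U term inequality
  have hterm : ∀ (t : Fin m → ℤ) (U : Finset (Fin m)),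
      (if ∀ i ∉ U, t i = 0 then
          β * ∏ i ∈ U, guessPr Q (s i) (t i) + (1 - β) * ∏ i ∈ U, guessPr P (s i) (t i)
        else 0)
      ≤ E * (if ∀ i ∉ U, t i = 0 then
          β * ∏ i ∈ U, guessPr Q (s' i) (t i) + (1 - β) * ∏ i ∈ U, guessPr P (s' i) (t i)
        else 0)
      + (if j ∈ U ∧ (∀ i ∉ U, t i = 0) ∧ t j = isgn (s j) then
          β * a * ∏ i ∈ U.erase j, guessPr Q (s i) (t i) else 0) := by
    intro t U
    by_cases hcond : ∀ i ∉ U, t i = 0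
    · by_cases hjU : j ∈ U
      · rw [if_pos hcond, if_pos hcond,
          ← Finset.mul_prod_erase U _ hjU, ← Finset.mul_prod_erase U _ hjU,
          ← Finset.mul_prod_erase U _ hjU, ← Finset.mul_prod_erase U _ hjU]
        have herQ : ∏ i ∈ U.erase j, guessPr Q (s' i) (t i)
            = ∏ i ∈ U.erase j, guessPr Q (s i) (t i) :=
          Finset.prod_congr rfl fun i hi => by rw [← hj i (Finset.ne_of_mem_erase hi)]
        have herP : ∏ i ∈ U.erase j, guessPr P (s' i) (t i)
            = ∏ i ∈ U.erase j, guessPr P (s i) (t i) :=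
          Finset.prod_congr rfl fun i hi => by rw [← hj i (Finset.ne_of_mem_erase hi)]
        rw [herQ, herP]
        have hPQ0 : 0 ≤ ∏ i ∈ U.erase j, guessPr Q (s i) (t i) := hprodQ s _ t
        have hPP0 : 0 ≤ ∏ i ∈ U.erase j, guessPr P (s i) (t i) := hprodP s _ t
        have h1 := hkeyQ (s j) (s' j) (t j)
        have h2 := hkeyP (s j) (s' j) (t j)
        have A2 : ((1 - β) * ∏ i ∈ U.erase j, guessPr P (s i) (t i)) * guessPr P (s j) (t j)
            ≤ ((1 - β) * ∏ i ∈ U.erase j, guessPr P (s i) (t i))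
                * (E * guessPr P (s' j) (t j)) :=
          mul_le_mul_of_nonneg_left h2 (mul_nonneg (by linarith) hPP0)
        by_cases hjt : t j = isgn (s j)
        · rw [if_pos ⟨hjU, hcond, hjt⟩]
          rw [if_pos hjt] at h1
          have A1 : (β * ∏ i ∈ U.erase j, guessPr Q (s i) (t i)) * guessPr Q (s j) (t j)
              ≤ (β * ∏ i ∈ U.erase j, guessPr Q (s i) (t i))
                  * (E * guessPr Q (s' j) (t j) + a * 1) :=
            mul_le_mul_of_nonneg_left h1 (mul_nonneg hβ0.le hPQ0)
          nlinarith [A1, A2]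
        · rw [if_neg (fun hcc => hjt hcc.2.2)]
          rw [if_neg hjt] at h1
          have A1 : (β * ∏ i ∈ U.erase j, guessPr Q (s i) (t i)) * guessPr Q (s j) (t j)
              ≤ (β * ∏ i ∈ U.erase j, guessPr Q (s i) (t i))
                  * (E * guessPr Q (s' j) (t j) + a * 0) :=
            mul_le_mul_of_nonneg_left h1 (mul_nonneg hβ0.le hPQ0)
          nlinarith [A1, A2]
      · have hequ : ∏ i ∈ U, guessPr Q (s i) (t i) = ∏ i ∈ U, guessPr Q (s' i) (t i) :=
          Finset.prod_congr rfl fun i hi => by rw [hj i fun h => hjU (h ▸ hi)]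
        have heqp : ∏ i ∈ U, guessPr P (s i) (t i) = ∏ i ∈ U, guessPr P (s' i) (t i) :=
          Finset.prod_congr rfl fun i hi => by rw [hj i fun h => hjU (h ▸ hi)]
        rw [if_pos hcond, if_pos hcond, if_neg (fun hcc => hjU hcc.1), hequ, heqp, add_zero]
        have h3 := hprodQ s' U t
        have h4 := hprodP s' U t
        have hX : 0 ≤ β * ∏ i ∈ U, guessPr Q (s' i) (t i)
            + (1 - β) * ∏ i ∈ U, guessPr P (s' i) (t i) := by nlinarith
        nlinarith [mul_nonneg (sub_nonneg.2 hE1) hX]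
    · rw [if_neg hcond, if_neg hcond, if_neg (fun hcc => hcond hcc.2.1)]
      norm_num
  -- pointwise bound
  have hpt : ∀ t, pathologicalPmf m r ε δ β s t
      ≤ E * pathologicalPmf m r ε δ β s' t + G t := by
    intro t
    rw [pmf_eq, pmf_eq, hGdef]
    have step := mul_le_mul_of_nonneg_left
      (Finset.sum_le_sum (fun U (_ : U ∈ PC) => hterm t U)) hc0
    refine le_trans step (le_of_eq ?_)
    rw [Finset.sum_add_distrib, ← Finset.mul_sum]
    ring
  -- the sum of the extra term is at most δ
  have hGsum : ∑ t ∈ S, G t ≤ δ := by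
    have hswap : ∑ t ∈ S, G t
        = c * ∑ U ∈ PC, ∑ t ∈ S,
            (if j ∈ U ∧ (∀ i ∉ U, t i = 0) ∧ t j = isgn (s j) then
              β * a * ∏ i ∈ U.erase j, guessPr Q (s i) (t i) else 0) := by
      rw [hGdef, ← Finset.mul_sum, Finset.sum_comm]
    have hU : ∀ U ∈ PC, (∑ t ∈ S,
        (if j ∈ U ∧ (∀ i ∉ U, t i = 0) ∧ t j = isgn (s j) then
          β * a * ∏ i ∈ U.erase j, guessPr Q (s i) (t i) else 0))
        = if j ∈ U then β * a else 0 := by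
      intro U _
      by_cases hjU : j ∈ U
      · rw [if_pos hjU]
        have hrw : ∀ t ∈ S,
            (if j ∈ U ∧ (∀ i ∉ U, t i = 0) ∧ t j = isgn (s j) then
              β * a * ∏ i ∈ U.erase j, guessPr Q (s i) (t i) else 0)
            = β * a * ∏ i, (fun (i : Fin m) (x : ℤ) => if i = j then (if x = isgn (s j) then (1:ℝ) else 0)
                else if i ∈ U then guessPr Q (s i) x else (if x = 0 then 1 else 0)) i (t i) := by
          intro t _
          simp only
          by_cases hcc : (∀ i ∉ U, t i = 0) ∧ t j = isgn (s j)
          · rw [if_pos ⟨hjU, hcc.1, hcc.2⟩]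
            rw [← Finset.prod_mul_prod_compl U]
            have hcompl : ∏ i ∈ Uᶜ,
                (if i = j then (if t i = isgn (s j) then (1:ℝ) else 0)
                  else if i ∈ U then guessPr Q (s i) (t i) else (if t i = 0 then 1 else 0))
                = 1 := by
              apply Finset.prod_eq_one
              intro i hi
              rw [Finset.mem_compl] at hi
              have hij : i ≠ j := fun h => hi (h ▸ hjU)
              rw [if_neg hij, if_neg hi, if_pos (hcc.1 i hi)]
            have hin : ∏ i ∈ U,
                (if i = j then (if t i = isgn (s j) then (1:ℝ) else 0)
                  else if i ∈ U then guessPr Q (s i) (t i) else (if t i = 0 then 1 else 0))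
                = ∏ i ∈ U.erase j, guessPr Q (s i) (t i) := by
              rw [← Finset.mul_prod_erase U _ hjU, if_pos rfl, if_pos hcc.2, one_mul]
              apply Finset.prod_congr rfl
              intro i hi
              rw [if_neg (Finset.ne_of_mem_erase hi), if_pos (Finset.mem_of_mem_erase hi)]
            rw [hcompl, hin, mul_one]
          · rw [if_neg (fun hx => hcc ⟨hx.2.1, hx.2.2⟩)]
            push_neg at hcc
            by_cases hjt : t j = isgn (s j)
            · have hnall : ¬ (∀ i ∉ U, t i = 0) := fun h => hcc h hjt
              push_neg at hnall
              obtain ⟨i, hiU, hti⟩ := hnall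
              have hij : i ≠ j := fun h => hiU (h ▸ hjU)
              rw [Finset.prod_eq_zero (Finset.mem_univ i)
                (by rw [if_neg hij, if_neg hiU, if_neg hti]), mul_zero]
            · rw [Finset.prod_eq_zero (Finset.mem_univ j)
                (by rw [if_pos rfl, if_neg hjt]), mul_zero]
        rw [Finset.sum_congr rfl hrw, ← Finset.mul_sum, hS,
          Finset.sum_prod_piFinset ({-1, 0, 1} : Finset ℤ)
            (fun (i : Fin m) (x : ℤ) => if i = j then (if x = isgn (s j) then (1:ℝ) else 0)
              else if i ∈ U then guessPr Q (s i) x else (if x = 0 then 1 else 0))]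
        have hone : ∏ i, (∑ x ∈ ({-1, 0, 1} : Finset ℤ),
            (if i = j then (if x = isgn (s j) then (1:ℝ) else 0)
              else if i ∈ U then guessPr Q (s i) x else (if x = 0 then 1 else 0))) = 1 := by
          apply Finset.prod_eq_one
          intro i _
          by_cases hij : i = j
          · simp only [if_pos hij]
            cases hsj : s j <;> norm_num [isgn]
          · simp only [if_neg hij]
            by_cases hiU : i ∈ U
            · simp only [if_pos hiU]; exact guessPr_sum Q (s i)
            · simp only [if_neg hiU]; norm_num
        rw [hone, mul_one]
      · rw [if_neg hjU]
        exact Finset.sum_eq_zero fun t _ => if_neg (fun hcc => hjU hcc.1)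
    have hchoosenat : m * (m - 1).choose (r - 1) = m.choose r * r := by
      have h7 := Nat.add_one_mul_choose_eq (m - 1) (r - 1)
      simpa [Nat.succ_eq_add_one, Nat.sub_add_cancel hm, Nat.sub_add_cancel hr1] using h7
    have hchoose : (m : ℝ) * ((m - 1).choose (r - 1) : ℝ)
        = ((m.choose r : ℝ)) * (r : ℝ) := by exact_mod_cast hchoosenat
    have hrpos : (0 : ℝ) < (r : ℝ) := by exact_mod_cast hr1
    have key : (1 / (m.choose r : ℝ)) * ((((m - 1).choose (r - 1) : ℕ) : ℝ)
        * (β * ((m : ℝ) * δ / ((r : ℝ) * β)))) = δ := by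
      field_simp
      linear_combination δ * hchoose
    rw [hswap, Finset.sum_congr rfl hU, ← Finset.sum_filter, Finset.sum_const,
      hPC, count_contains m r hr1 j, nsmul_eq_mul, hc, ha, key]
  -- final assembly
  rw [htsum s, htsum s']
  have step1 : ∀ t ∈ S, A.indicator (pathologicalPmf m r ε δ β s) t
      ≤ E * A.indicator (pathologicalPmf m r ε δ β s') t + A.indicator G t := by
    intro t _
    by_cases htA : t ∈ A
    · rw [Set.indicator_of_mem htA, Set.indicator_of_mem htA, Set.indicator_of_mem htA]
      exact hpt t
    · rw [Set.indicator_of_notMem htA, Set.indicator_of_notMem htA,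
        Set.indicator_of_notMem htA]
      norm_num
  calc ∑ t ∈ S, A.indicator (pathologicalPmf m r ε δ β s) t
      ≤ ∑ t ∈ S, (E * A.indicator (pathologicalPmf m r ε δ β s') t + A.indicator G t) :=
        Finset.sum_le_sum step1
    _ = E * ∑ t ∈ S, A.indicator (pathologicalPmf m r ε δ β s') t
          + ∑ t ∈ S, A.indicator G t := by
        rw [Finset.sum_add_distrib, ← Finset.mul_sum]
    _ ≤ E * ∑ t ∈ S, A.indicator (pathologicalPmf m r ε δ β s') t + δ := by
        have h6 : ∑ t ∈ S, A.indicator G t ≤ ∑ t ∈ S, G t := by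
          apply Finset.sum_le_sum
          intro t _
          by_cases htA : t ∈ A
          · rw [Set.indicator_of_mem htA]
          · rw [Set.indicator_of_notMem htA]; exact hG0 t
        linarith [hGsum]
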